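/- arXiv:1306.6145 — 6 statements merged into one kernel-verified Lean document; each statement's English description precedes it below -/
import Mathlib

section
/- Let {T_k}_{k≥0} be strictly nonexpansive operators on ℝⁿ with F := ⋂_k Fix(T_k) ≠ ∅, and let {x^k} be generated by x^{k+1} = T_{k+1}(x^k). Suppose for every ℓ ≥ 0 there exists k(ℓ) ≥ 0 such that ‖T_{k+1}(x^k) − z‖ ≤ ‖T_ℓ(x^k) − z‖ for all z ∈ F and all k ≥ k(ℓ). Then every accumulation point of {x^k} belongs to F. -/
/-- For a family of strictly nonexpansive operators with nonempty common fixed point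
set `F`, a sequence generated by `x^{k+1} = T_{k+1}(x^k)` satisfying the monotonicity
condition (Condition 1) has all its accumulation points in `F`. -/
theorem accumulation_points_in_F (n : ℕ)
    (T : ℕ → EuclideanSpace ℝ (Fin n) → EuclideanSpace ℝ (Fin n))
    (hT1 : ∀ k x y, ‖T k x - T k y‖ ≤ ‖x - y‖)
    (hT2 : ∀ k x y, ‖T k x - T k y‖ = ‖x - y‖ → T k x - T k y = x - y)
    (F : Set (EuclideanSpace ℝ (Fin n))) (hF : F = {z | ∀ k, T k z = z})
    (hFne : F.Nonempty)
    (x : ℕ → EuclideanSpace ℝ (Fin n))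
    (hx : ∀ k, x (k + 1) = T (k + 1) (x k))
    (hcond : ∀ ℓ : ℕ, ∃ kℓ : ℕ, ∀ z ∈ F, ∀ k ≥ kℓ,
      ‖T (k + 1) (x k) - z‖ ≤ ‖T ℓ (x k) - z‖) :
    ∀ xbar : EuclideanSpace ℝ (Fin n), MapClusterPt xbar Filter.atTop x → xbar ∈ F := by
  intro xbar hclus
  obtain ⟨z, hzF⟩ := hFne
  have hz : ∀ k, T k z = z := by rw [hF] at hzF; exact hzF
  -- the sequence a k = ‖x k - z‖ is antitone
  set a : ℕ → ℝ := fun k => ‖x k - z‖ with ha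
  have hstep : ∀ k, a (k + 1) ≤ a k := by
    intro k
    have := hT1 (k + 1) (x k) z
    rw [hz (k + 1)] at this
    simpa [ha, hx k] using this
  have hanti : Antitone a := antitone_nat_of_succ_le hstep
  have hbdd : BddBelow (Set.range a) := ⟨0, by rintro _ ⟨k, rfl⟩; exact norm_nonneg _⟩
  -- a converges to its infimum d
  set d : ℝ := ⨅ k, a k with hd
  have hda : Filter.Tendsto a Filter.atTop (nhds d) :=
    tendsto_atTop_ciInf hanti hbdd
  -- extract subsequence converging to xbar
  obtain ⟨ψ, hψmono, hψ⟩ := TopologicalSpace.FirstCountableTopology.tendsto_subseq hclus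
  have hsub : Filter.Tendsto (fun j => a (ψ j)) Filter.atTop (nhds ‖xbar - z‖) := by
    have : Filter.Tendsto (fun j => x (ψ j)) Filter.atTop (nhds xbar) := hψ
    exact ((continuous_norm.comp (continuous_id.sub continuous_const)).continuousAt).tendsto.comp this
  have hxbarz : ‖xbar - z‖ = d :=
    tendsto_nhds_unique hsub (hda.comp hψmono.tendsto_atTop)
  -- show T ℓ xbar = xbar for each ℓ
  rw [hF]
  intro ℓ
  obtain ⟨kℓ, hkℓ⟩ := hcond ℓ
  -- b k = ‖T ℓ (x k) - z‖ squeezed between a (k+1) and a k for k ≥ kℓ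
  set b : ℕ → ℝ := fun k => ‖T ℓ (x k) - z‖ with hb
  have hbu : ∀ k, b k ≤ a k := by
    intro k
    have := hT1 ℓ (x k) z
    rw [hz ℓ] at this
    exact this
  have hbl : ∀ k ≥ kℓ, a (k + 1) ≤ b k := by
    intro k hk
    have := hkℓ z hzF k hk
    simpa [ha, hb, hx k] using this
  have hbtend : Filter.Tendsto b Filter.atTop (nhds d) := by
    have h1 : Filter.Tendsto (fun k => a (k + 1)) Filter.atTop (nhds d) :=
      hda.comp (Filter.tendsto_add_atTop_nat 1)
    refine tendsto_of_tendsto_of_tendsto_of_le_of_le' h1 hda ?_ ?_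
    · exact Filter.eventually_atTop.mpr ⟨kℓ, hbl⟩
    · exact Filter.Eventually.of_forall hbu
  -- T ℓ is continuous
  have hTcont : Continuous (T ℓ) := by
    have : LipschitzWith 1 (T ℓ) := by
      refine LipschitzWith.of_dist_le_mul fun p q => ?_
      simpa [dist_eq_norm] using hT1 ℓ p q
    exact this.continuous
  have hsub2 : Filter.Tendsto (fun j => b (ψ j)) Filter.atTop (nhds ‖T ℓ xbar - z‖) := by
    have h1 : Filter.Tendsto (fun j => T ℓ (x (ψ j))) Filter.atTop (nhds (T ℓ xbar)) :=
      (hTcont.continuousAt.tendsto).comp hψ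
    exact ((continuous_norm.comp (continuous_id.sub continuous_const)).continuousAt).tendsto.comp h1
  have hTxbarz : ‖T ℓ xbar - z‖ = d :=
    tendsto_nhds_unique hsub2 (hbtend.comp hψmono.tendsto_atTop)
  have hkey : ‖T ℓ xbar - T ℓ z‖ = ‖xbar - z‖ := by
    rw [hz ℓ, hTxbarz, hxbarz]
  have := hT2 ℓ xbar z hkey
  rw [hz ℓ] at this
  have := sub_left_injective.eq_iff.mp this
  exact this
end

section
/- Let {T_k}_{k≥0} be strictly nonexpansive operators on ℝⁿ with F := ⋂_k Fix(T_k) ≠ ∅, and let {x^k} be generated by x^{k+1} = T_{k+1}(x^k). If for every ℓ ≥ 0 there exists k(ℓ) ≥ 0 such that ‖T_{k+1}(x^k) − z‖ ≤ ‖T_ℓ(x^k) − z‖ for all z ∈ F and all k ≥ k(ℓ), then the sequence {x^k} converges to an element of F. -/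
open Filter Topology

/-- Main convergence theorem: for a family of strictly nonexpansive operators with
nonempty common fixed point set `F` and the monotonicity condition (Condition 1), any
sequence generated by `x^{k+1} = T_{k+1}(x^k)` converges to an element of `F`. -/
theorem convergence_of_SNE_family (n : ℕ)
    (T : ℕ → EuclideanSpace ℝ (Fin n) → EuclideanSpace ℝ (Fin n))
    (hT1 : ∀ k x y, ‖T k x - T k y‖ ≤ ‖x - y‖)
    (hT2 : ∀ k x y, ‖T k x - T k y‖ = ‖x - y‖ → T k x - T k y = x - y)
    (F : Set (EuclideanSpace ℝ (Fin n))) (hF : F = {z | ∀ k, T k z = z})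
    (hFne : F.Nonempty)
    (x : ℕ → EuclideanSpace ℝ (Fin n))
    (hx : ∀ k, x (k + 1) = T (k + 1) (x k))
    (hcond : ∀ ℓ : ℕ, ∃ kℓ : ℕ, ∀ z ∈ F, ∀ k ≥ kℓ,
      ‖T (k + 1) (x k) - z‖ ≤ ‖T ℓ (x k) - z‖) :
    ∃ xbar ∈ F, Filter.Tendsto x Filter.atTop (nhds xbar) := by
  obtain ⟨z0, hz0F⟩ := hFne
  have hz0 : ∀ k, T k z0 = z0 := by rw [hF] at hz0F; exact hz0F
  -- Fejér monotonicity
  have hmono : ∀ z, (∀ k, T k z = z) → ∀ k, ‖x (k + 1) - z‖ ≤ ‖x k - z‖ := by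
    intro z hz k
    rw [hx k]
    calc ‖T (k + 1) (x k) - z‖ = ‖T (k + 1) (x k) - T (k + 1) z‖ := by rw [hz]
      _ ≤ ‖x k - z‖ := hT1 _ _ _
  have hanti : ∀ z, (∀ k, T k z = z) → Antitone (fun k => ‖x k - z‖) := fun z hz =>
    antitone_nat_of_succ_le (hmono z hz)
  have hbdd : ∀ z : EuclideanSpace ℝ (Fin n),
      BddBelow (Set.range fun k => ‖x k - z‖) :=
    fun z => ⟨0, by rintro r ⟨k, rfl⟩; exact norm_nonneg _⟩
  have hlim : ∀ z, (∀ k, T k z = z) →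
      Tendsto (fun k => ‖x k - z‖) atTop (𝓝 (⨅ k, ‖x k - z‖)) :=
    fun z hz => tendsto_atTop_ciInf (hanti z hz) (hbdd z)
  -- boundedness and convergent subsequence
  have hball : ∀ k, x k ∈ Metric.closedBall z0 (‖x 0 - z0‖) := by
    intro k
    simpa [Metric.mem_closedBall, dist_eq_norm] using hanti z0 hz0 (Nat.zero_le k)
  obtain ⟨xbar, -, φ, hφ, hsub⟩ :=
    tendsto_subseq_of_bounded Metric.isBounded_closedBall hball
  -- T ℓ is continuous
  have hlip : ∀ ℓ, LipschitzWith 1 (T ℓ) := fun ℓ =>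
    LipschitzWith.of_dist_le_mul fun a b => by
      simpa [dist_eq_norm] using hT1 ℓ a b
  -- the cluster point is in F
  have hxbarF : xbar ∈ F := by
    rw [hF]
    intro ℓ
    set d := ⨅ k, ‖x k - z0‖ with hd
    have hxd : ‖xbar - z0‖ = d := by
      have h1 : Tendsto (fun j => ‖x (φ j) - z0‖) atTop (𝓝 ‖xbar - z0‖) :=
        (hsub.sub tendsto_const_nhds).norm
      have h2 : Tendsto (fun j => ‖x (φ j) - z0‖) atTop (𝓝 d) :=
        (hlim z0 hz0).comp hφ.tendsto_atTop
      exact tendsto_nhds_unique h1 h2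
    obtain ⟨kℓ, hkℓ⟩ := hcond ℓ
    -- squeeze: ‖T ℓ (x k) - z0‖ → d
    have hgd : Tendsto (fun k => ‖T ℓ (x k) - z0‖) atTop (𝓝 d) := by
      have hlower : Tendsto (fun k => ‖x (k + 1) - z0‖) atTop (𝓝 d) :=
        (hlim z0 hz0).comp (tendsto_add_atTop_nat 1)
      refine tendsto_of_tendsto_of_tendsto_of_le_of_le' hlower (hlim z0 hz0) ?_ ?_
      · filter_upwards [eventually_ge_atTop kℓ] with k hk
        rw [hx k]
        exact hkℓ z0 hz0F k hk
      · filter_upwards with k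
        calc ‖T ℓ (x k) - z0‖ = ‖T ℓ (x k) - T ℓ z0‖ := by rw [hz0]
          _ ≤ ‖x k - z0‖ := hT1 _ _ _
    have hTd : ‖T ℓ xbar - z0‖ = d := by
      have h1 : Tendsto (fun j => ‖T ℓ (x (φ j)) - z0‖) atTop (𝓝 ‖T ℓ xbar - z0‖) :=
        ((((hlip ℓ).continuous.tendsto xbar).comp hsub).sub tendsto_const_nhds).norm
      have h2 : Tendsto (fun j => ‖T ℓ (x (φ j)) - z0‖) atTop (𝓝 d) :=
        hgd.comp hφ.tendsto_atTop
      exact tendsto_nhds_unique h1 h2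
    have heq : ‖T ℓ xbar - T ℓ z0‖ = ‖xbar - z0‖ := by
      rw [hz0 ℓ, hTd, hxd]
    have := hT2 ℓ xbar z0 heq
    rw [hz0 ℓ] at this
    exact sub_left_inj.mp this
  refine ⟨xbar, hxbarF, ?_⟩
  -- whole sequence converges to xbar
  have hxbarfix : ∀ k, T k xbar = xbar := by rw [hF] at hxbarF; exact hxbarF
  have h2 : Tendsto (fun j => ‖x (φ j) - xbar‖) atTop (𝓝 0) :=
    tendsto_iff_norm_sub_tendsto_zero.mp hsub
  have h3 : Tendsto (fun j => ‖x (φ j) - xbar‖) atTop (𝓝 (⨅ k, ‖x k - xbar‖)) :=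
    (hlim xbar hxbarfix).comp hφ.tendsto_atTop
  have hzero : (⨅ k, ‖x k - xbar‖) = 0 := tendsto_nhds_unique h3 h2
  have := hlim xbar hxbarfix
  rw [hzero] at this
  exact tendsto_iff_norm_sub_tendsto_zero.mpr this
end

section
/- If S is an n×n real matrix that is symmetric, stochastic (nonnegative entries with each row summing to 1), and has positive diagonal entries, then ‖Sx‖ ≤ ‖x‖ for all x ∈ ℝⁿ, and ‖Sx‖ = ‖x‖ implies Sx = x. -/
/-- Variance identity for probability weights. -/
lemma var_identity (n : ℕ) (a x : Fin n → ℝ) (hsum : ∑ j, a j = 1) :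
    ∑ j, ∑ k, a j * a k * (x j - x k)^2
      = 2 * ((∑ j, a j * x j ^ 2) - (∑ j, a j * x j)^2) := by
  have h1 : ∀ j, ∑ k, a j * a k * (x j - x k)^2
      = a j * x j ^ 2 * (∑ k, a k) + a j * (∑ k, a k * x k ^ 2)
        - 2 * (a j * x j) * (∑ k, a k * x k) := by
    intro j
    rw [Finset.mul_sum, Finset.mul_sum, Finset.mul_sum, ← Finset.sum_add_distrib,
      ← Finset.sum_sub_distrib]
    apply Finset.sum_congr rfl
    intro k _
    ring
  calc ∑ j, ∑ k, a j * a k * (x j - x k)^2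
      = ∑ j, (a j * x j ^ 2 * (∑ k, a k) + a j * (∑ k, a k * x k ^ 2)
          - 2 * (a j * x j) * (∑ k, a k * x k)) := by
        exact Finset.sum_congr rfl fun j _ => h1 j
    _ = (∑ j, a j * x j ^ 2) * (∑ k, a k) + (∑ j, a j) * (∑ k, a k * x k ^ 2)
          - 2 * (∑ j, a j * x j) * (∑ k, a k * x k) := by
        rw [Finset.sum_sub_distrib, Finset.sum_add_distrib, ← Finset.sum_mul,
          ← Finset.sum_mul, ← Finset.sum_mul, ← Finset.mul_sum]
    _ = 2 * ((∑ j, a j * x j ^ 2) - (∑ j, a j * x j)^2) := by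
        rw [hsum]; ring

/-- A symmetric, stochastic matrix `S` with positive diagonal entries satisfies
`‖Sx‖ ≤ ‖x‖` for all `x ∈ ℝⁿ`, and `‖Sx‖ = ‖x‖` implies `Sx = x`. -/
theorem stochastic_symmetric_posdiag_nonexpansive (n : ℕ)
    (S : Matrix (Fin n) (Fin n) ℝ)
    (hsym : S.IsSymm)
    (hnn : ∀ i j, 0 ≤ S i j)
    (hrow : ∀ i, ∑ j, S i j = 1)
    (hdiag : ∀ i, 0 < S i i) :
    (∀ x : EuclideanSpace ℝ (Fin n), ‖Matrix.toEuclideanLin S x‖ ≤ ‖x‖) ∧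
    (∀ x : EuclideanSpace ℝ (Fin n),
      ‖Matrix.toEuclideanLin S x‖ = ‖x‖ → Matrix.toEuclideanLin S x = x) := by
  have happ : ∀ (x : EuclideanSpace ℝ (Fin n)) (i : Fin n),
      Matrix.toEuclideanLin S x i = ∑ j, S i j * x j := by
    intro x i
    simp [Matrix.toEuclideanLin_apply, Matrix.mulVec, dotProduct, WithLp.equiv]
  have hsymm : ∀ i j, S i j = S j i := fun i j => hsym.apply j i
  have hcol : ∀ j, ∑ i, S i j = 1 := by
    intro j
    calc ∑ i, S i j = ∑ i, S j i := Finset.sum_congr rfl fun i _ => hsymm i j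
      _ = 1 := hrow j
  -- per-row Jensen gap is nonnegative
  have hrowjensen : ∀ (x : Fin n → ℝ) (i : Fin n),
      (∑ j, S i j * x j)^2 ≤ ∑ j, S i j * x j ^ 2 := by
    intro x i
    have := var_identity n (S i) x (hrow i)
    nlinarith [Finset.sum_nonneg (fun j (_ : j ∈ Finset.univ) =>
      Finset.sum_nonneg (fun k (_ : k ∈ Finset.univ) =>
        mul_nonneg (mul_nonneg (hnn i j) (hnn i k)) (sq_nonneg (x j - x k))))]
  -- middle sum equals ‖x‖²
  have hmid : ∀ x : Fin n → ℝ, ∑ i, ∑ j, S i j * x j ^ 2 = ∑ j, x j ^ 2 := by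
    intro x
    rw [Finset.sum_comm]
    apply Finset.sum_congr rfl
    intro j _
    rw [← Finset.sum_mul, hcol]
    ring
  have hsq : ∀ x : Fin n → ℝ, ∑ i, (∑ j, S i j * x j)^2 ≤ ∑ j, x j ^ 2 := by
    intro x
    calc ∑ i, (∑ j, S i j * x j)^2 ≤ ∑ i, ∑ j, S i j * x j ^ 2 :=
          Finset.sum_le_sum fun i _ => hrowjensen x i
      _ = ∑ j, x j ^ 2 := hmid x
  have hnorm : ∀ y : EuclideanSpace ℝ (Fin n), ‖y‖ = Real.sqrt (∑ i, (y i)^2) := by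
    intro y
    rw [EuclideanSpace.norm_eq]
    congr 1
    exact Finset.sum_congr rfl fun i _ => by rw [Real.norm_eq_abs, sq_abs]
  have hle : ∀ x : EuclideanSpace ℝ (Fin n), ‖Matrix.toEuclideanLin S x‖ ≤ ‖x‖ := by
    intro x
    rw [hnorm, hnorm]
    apply Real.sqrt_le_sqrt
    calc ∑ i, (Matrix.toEuclideanLin S x i)^2 = ∑ i, (∑ j, S i j * x j)^2 :=
          Finset.sum_congr rfl fun i _ => by rw [happ]
      _ ≤ ∑ j, (x j)^2 := hsq x
  refine ⟨hle, ?_⟩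
  intro x hx
  -- equality of squared sums
  have hsq_eq : ∑ i, (∑ j, S i j * x j)^2 = ∑ j, (x j)^2 := by
    have h1 : Real.sqrt (∑ i, (Matrix.toEuclideanLin S x i)^2)
        = Real.sqrt (∑ i, (x i)^2) := by rw [← hnorm, ← hnorm, hx]
    have h2 := congrArg (fun t => t ^ 2) h1
    simp only [Real.sq_sqrt (Finset.sum_nonneg fun i _ => sq_nonneg _)] at h2
    calc ∑ i, (∑ j, S i j * x j)^2 = ∑ i, (Matrix.toEuclideanLin S x i)^2 :=
          Finset.sum_congr rfl fun i _ => by rw [happ]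
      _ = ∑ j, (x j)^2 := h2
  -- each row's Jensen gap is zero
  have hgap : ∀ i, (∑ j, S i j * x j)^2 = ∑ j, S i j * x j ^ 2 := by
    have hsumzero : ∑ i, ((∑ j, S i j * x j ^ 2) - (∑ j, S i j * x j)^2) = 0 := by
      rw [Finset.sum_sub_distrib, hmid, hsq_eq, sub_self]
    have hnn' : ∀ i ∈ Finset.univ,
        0 ≤ (∑ j, S i j * x j ^ 2) - (∑ j, S i j * x j)^2 := by
      intro i _
      linarith [hrowjensen x i]
    intro i
    have := (Finset.sum_eq_zero_iff_of_nonneg hnn').mp hsumzero i (Finset.mem_univ i)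
    linarith
  -- conclude x constant on support of each row
  have hfix : ∀ i, ∑ j, S i j * x j = x i := by
    intro i
    have hv := var_identity n (S i) x (hrow i)
    rw [← hgap i] at hv
    have hzero : ∑ j, ∑ k, S i j * S i k * (x j - x k)^2 = 0 := by linarith
    have hterm : ∀ j k, S i j * S i k * (x j - x k)^2 = 0 := by
      have h1 := (Finset.sum_eq_zero_iff_of_nonneg (fun j (_ : j ∈ Finset.univ) =>
        Finset.sum_nonneg (fun k (_ : k ∈ Finset.univ) =>
          mul_nonneg (mul_nonneg (hnn i j) (hnn i k)) (sq_nonneg (x j - x k))))).mp hzero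
      intro j k
      have h2 := (Finset.sum_eq_zero_iff_of_nonneg (fun k (_ : k ∈ Finset.univ) =>
          mul_nonneg (mul_nonneg (hnn i j) (hnn i k)) (sq_nonneg (x j - x k)))).mp
        (h1 j (Finset.mem_univ j)) k (Finset.mem_univ k)
      exact h2
    have hconst : ∀ j, S i j * x j = S i j * x i := by
      intro j
      have h3 := hterm j i
      rcases eq_or_lt_of_le (hnn i j) with h | h
      · rw [← h]; ring
      · have h4 : (x j - x i)^2 = 0 := by
          have hpos := mul_pos h (hdiag i)
          by_contra hne
          have : 0 < (x j - x i)^2 := lt_of_le_of_ne (sq_nonneg _) (Ne.symm hne)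
          nlinarith
        have : x j = x i := by nlinarith [sq_nonneg (x j - x i)]
        rw [this]
    calc ∑ j, S i j * x j = ∑ j, S i j * x i :=
          Finset.sum_congr rfl fun j _ => hconst j
      _ = (∑ j, S i j) * x i := by rw [Finset.sum_mul]
      _ = x i := by rw [hrow i]; ring
  ext i
  rw [happ, hfix]
end

section
/- A symmetric, stochastic n×n real matrix S with positive diagonal entries defines a strictly nonexpansive linear operator: for all x, y ∈ ℝⁿ, ‖Sx − Sy‖ ≤ ‖x − y‖, and ‖Sx − Sy‖ = ‖x − y‖ implies Sx − Sy = x − y. -/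
open Finset

private lemma sne_ident {n : ℕ} (w z : Fin n → ℝ) (hw : ∑ j, w j = 1) :
    (∑ j, w j * z j) ^ 2 + (∑ j, ∑ k, w j * w k * (z j - z k) ^ 2) / 2
      = ∑ j, w j * z j ^ 2 := by
  have h1 : ∑ j, ∑ k, w j * w k * (z j - z k) ^ 2
      = 2 * (∑ j, w j * z j ^ 2) - 2 * (∑ j, w j * z j) ^ 2 := by
    have e : ∀ j k : Fin n, w j * w k * (z j - z k) ^ 2
        = w j * z j ^ 2 * w k + w j * (w k * z k ^ 2) - 2 * ((w j * z j) * (w k * z k)) := by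
      intro j k; ring
    have inner : ∀ j : Fin n, ∑ k, w j * w k * (z j - z k) ^ 2
        = w j * z j ^ 2 + w j * (∑ k, w k * z k ^ 2)
          - 2 * ((w j * z j) * (∑ k, w k * z k)) := by
      intro j
      simp_rw [e]
      rw [Finset.sum_sub_distrib, Finset.sum_add_distrib]
      simp only [← Finset.mul_sum, ← Finset.sum_mul]
      rw [hw]
      ring
    simp_rw [inner]
    rw [Finset.sum_sub_distrib, Finset.sum_add_distrib]
    simp only [← Finset.mul_sum, ← Finset.sum_mul]
    rw [hw]
    ring
  rw [h1]; ring

/-- key sum inequality with identity -/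
private lemma sne_key {n : ℕ} (S : Matrix (Fin n) (Fin n) ℝ)
    (hsym : S.IsSymm) (hrow : ∀ i, ∑ j, S i j = 1) (z : Fin n → ℝ) :
    (∑ i, (S.mulVec z i) ^ 2)
      + (∑ i, ∑ j, ∑ k, S i j * S i k * (z j - z k) ^ 2) / 2 = ∑ j, z j ^ 2 := by
  have hcol : ∀ j, ∑ i, S i j = 1 := by
    intro j
    calc ∑ i, S i j = ∑ i, S j i := by
          refine Finset.sum_congr rfl fun i _ => ?_
          exact (hsym.apply j i).symm ▸ rfl
      _ = 1 := hrow j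
  have h1 : ∀ i, (S.mulVec z i) ^ 2 + (∑ j, ∑ k, S i j * S i k * (z j - z k) ^ 2) / 2
      = ∑ j, S i j * z j ^ 2 := fun i => sne_ident (fun j => S i j) z (hrow i)
  have h2 : ∑ i, ((S.mulVec z i) ^ 2 + (∑ j, ∑ k, S i j * S i k * (z j - z k) ^ 2) / 2)
      = ∑ i, ∑ j, S i j * z j ^ 2 := Finset.sum_congr rfl fun i _ => h1 i
  rw [Finset.sum_add_distrib, ← Finset.sum_div] at h2
  rw [h2, Finset.sum_comm]
  refine Finset.sum_congr rfl fun j _ => ?_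
  rw [← Finset.sum_mul, hcol j, one_mul]

/-- A symmetric, stochastic matrix `S` with positive diagonal entries defines a strictly
nonexpansive linear operator: `‖Sx − Sy‖ ≤ ‖x − y‖` for all `x, y`, and
`‖Sx − Sy‖ = ‖x − y‖` implies `Sx − Sy = x − y`. -/
theorem stochastic_symmetric_posdiag_SNE (n : ℕ)
    (S : Matrix (Fin n) (Fin n) ℝ)
    (hsym : S.IsSymm)
    (hnn : ∀ i j, 0 ≤ S i j)
    (hrow : ∀ i, ∑ j, S i j = 1)
    (hdiag : ∀ i, 0 < S i i) :
    (∀ x y : EuclideanSpace ℝ (Fin n),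
      ‖Matrix.toEuclideanLin S x - Matrix.toEuclideanLin S y‖ ≤ ‖x - y‖) ∧
    (∀ x y : EuclideanSpace ℝ (Fin n),
      ‖Matrix.toEuclideanLin S x - Matrix.toEuclideanLin S y‖ = ‖x - y‖ →
        Matrix.toEuclideanLin S x - Matrix.toEuclideanLin S y = x - y) := by
  have hsub : ∀ x y : EuclideanSpace ℝ (Fin n),
      Matrix.toEuclideanLin S x - Matrix.toEuclideanLin S y
        = Matrix.toEuclideanLin S (x - y) := fun x y => (map_sub _ x y).symm
  have hDnn : ∀ z : Fin n → ℝ,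
      0 ≤ ∑ i, ∑ j, ∑ k, S i j * S i k * (z j - z k) ^ 2 := by
    intro z
    exact Finset.sum_nonneg fun i _ => Finset.sum_nonneg fun j _ =>
      Finset.sum_nonneg fun k _ =>
        mul_nonneg (mul_nonneg (hnn i j) (hnn i k)) (sq_nonneg _)
  have hnorm : ∀ v : EuclideanSpace ℝ (Fin n), ‖v‖ = Real.sqrt (∑ i, v i ^ 2) := by
    intro v
    rw [EuclideanSpace.norm_eq]
    congr 1
    exact Finset.sum_congr rfl fun i _ => by rw [Real.norm_eq_abs, sq_abs]
  have happ : ∀ (z : EuclideanSpace ℝ (Fin n)) (i : Fin n),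
      (Matrix.toEuclideanLin S z) i = S.mulVec z i := by
    intro z i
    rw [Matrix.toEuclideanLin_apply]
  have hle : ∀ z : EuclideanSpace ℝ (Fin n),
      ∑ i, (Matrix.toEuclideanLin S z) i ^ 2 ≤ ∑ i, z i ^ 2 := by
    intro z
    have := sne_key S hsym hrow (fun i => z i)
    have hD := hDnn (fun i => z i)
    simp_rw [happ]
    nlinarith [this, hD]
  constructor
  · intro x y
    rw [hsub, hnorm, hnorm]
    exact Real.sqrt_le_sqrt (hle (x - y))
  · intro x y heq
    rw [hsub] at heq ⊢
    set z := x - y with hz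
    rw [hnorm, hnorm] at heq
    have hsq : ∑ i, (Matrix.toEuclideanLin S z) i ^ 2 = ∑ i, z i ^ 2 := by
      have h1 : (0:ℝ) ≤ ∑ i, (Matrix.toEuclideanLin S z) i ^ 2 :=
        Finset.sum_nonneg fun i _ => sq_nonneg _
      have h2 : (0:ℝ) ≤ ∑ i, z i ^ 2 := Finset.sum_nonneg fun i _ => sq_nonneg _
      have := congrArg (fun t => t ^ 2) heq
      simpa only [Real.sq_sqrt h1, Real.sq_sqrt h2] using this
    simp_rw [happ] at hsq
    have hkey := sne_key S hsym hrow (fun i => z i)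
    have hD0 : ∑ i, ∑ j, ∑ k, S i j * S i k * ((z j) - (z k)) ^ 2 = 0 := by
      nlinarith [hkey, hsq]
    -- each term is zero
    have hterm : ∀ i j k : Fin n, S i j * S i k * (z j - z k) ^ 2 = 0 := by
      intro i j k
      have h1 := (Finset.sum_eq_zero_iff_of_nonneg (fun i _ =>
        Finset.sum_nonneg fun j _ => Finset.sum_nonneg fun k _ =>
          mul_nonneg (mul_nonneg (hnn i j) (hnn i k)) (sq_nonneg _))).mp hD0
          i (Finset.mem_univ i)
      have h2 := (Finset.sum_eq_zero_iff_of_nonneg (fun j _ =>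
        Finset.sum_nonneg fun k _ =>
          mul_nonneg (mul_nonneg (hnn i j) (hnn i k)) (sq_nonneg _))).mp h1
          j (Finset.mem_univ j)
      exact (Finset.sum_eq_zero_iff_of_nonneg (fun k _ =>
        mul_nonneg (mul_nonneg (hnn i j) (hnn i k)) (sq_nonneg _))).mp h2
        k (Finset.mem_univ k)
    have hfix : ∀ i j : Fin n, S i j * z j = S i j * z i := by
      intro i j
      have := hterm i j i
      rcases mul_eq_zero.mp this with h | h
      · rcases mul_eq_zero.mp h with h' | h'
        · rw [h']; simp
        · exact absurd h' (ne_of_gt (hdiag i))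
      · have : z j = z i := by nlinarith [sq_nonneg (z j - z i)]
        rw [this]
    -- Sz = z
    have : Matrix.toEuclideanLin S z = z := by
      refine PiLp.ext fun i => ?_
      rw [happ]
      show ∑ j, S i j * z j = z i
      calc ∑ j, S i j * z j = ∑ j, S i j * z i :=
            Finset.sum_congr rfl fun j _ => hfix i j
        _ = (∑ j, S i j) * z i := by rw [Finset.sum_mul]
        _ = z i := by rw [hrow i, one_mul]
    exact this
end

section
/- Let A be an m×n real matrix, and let T (n×n) and R (n×m) satisfy T + RA = I, range(R) ⊆ range(Aᵀ), and ‖T P_{range(Aᵀ)}‖ < 1 (operator norm, where P_V is orthogonal projection onto V). Then: (i) Tx = x for x ∈ null(A); (ii) T maps range(Aᵀ) into range(Aᵀ); (iii) ‖Tx‖ = ‖x‖ if and only if x ∈ null(A); (iv) ‖T‖ ≤ 1. -/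
open Matrix
open scoped RealInnerProductSpace
/-- The continuous linear map on Euclidean spaces induced by a matrix. -/
noncomputable def mulE {m n : ℕ} (A : Matrix (Fin m) (Fin n) ℝ) :
    EuclideanSpace ℝ (Fin n) →L[ℝ] EuclideanSpace ℝ (Fin m) :=
  LinearMap.toContinuousLinearMap (Matrix.toEuclideanLin A)

/-- The orthogonal projection of the ambient space onto a subspace, as a map of the
ambient space. -/
noncomputable def projCLM {n : ℕ} (V : Submodule ℝ (EuclideanSpace ℝ (Fin n))) :
    EuclideanSpace ℝ (Fin n) →L[ℝ] EuclideanSpace ℝ (Fin n) :=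
  V.subtypeL.comp (V.orthogonalProjectionOnto)

lemma mulE_apply {m n : ℕ} (A : Matrix (Fin m) (Fin n) ℝ) (x : EuclideanSpace ℝ (Fin n)) :
    mulE A x = Matrix.toEuclideanLin A x := rfl

lemma toEuclideanLin_mul_apply {m n p : ℕ} (A : Matrix (Fin m) (Fin n) ℝ)
    (B : Matrix (Fin n) (Fin p) ℝ) (x : EuclideanSpace ℝ (Fin p)) :
    Matrix.toEuclideanLin (A * B) x = Matrix.toEuclideanLin A (Matrix.toEuclideanLin B x) := by
  simp [Matrix.toEuclideanLin_apply, Matrix.mulVec_mulVec]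

lemma toEuclideanLin_one_apply {n : ℕ} (x : EuclideanSpace ℝ (Fin n)) :
    Matrix.toEuclideanLin (1 : Matrix (Fin n) (Fin n) ℝ) x = x := by
  simp [Matrix.toEuclideanLin_apply]

set_option maxHeartbeats 1000000 in
/-- If `T + RA = I`, `range R ⊆ range Aᵀ` and `‖T P_{range Aᵀ}‖ < 1`, then:
(i) `Tx = x` for `x ∈ null A`; (ii) `T` maps `range Aᵀ` into itself;
(iii) `‖Tx‖ = ‖x‖` iff `x ∈ null A`; (iv) `‖T‖ ≤ 1`. -/
theorem properties_of_T (m n : ℕ)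
    (A : Matrix (Fin m) (Fin n) ℝ)
    (T : Matrix (Fin n) (Fin n) ℝ)
    (R : Matrix (Fin n) (Fin m) ℝ)
    (h1 : T + R * A = 1)
    (h2 : ∀ y : EuclideanSpace ℝ (Fin m),
      mulE R y ∈ LinearMap.range (Matrix.toEuclideanLin Aᵀ))
    (h3 : ‖(mulE T).comp (projCLM (LinearMap.range (Matrix.toEuclideanLin Aᵀ)))‖ < 1) :
    (∀ x ∈ LinearMap.ker (Matrix.toEuclideanLin A), mulE T x = x) ∧
    (∀ x ∈ LinearMap.range (Matrix.toEuclideanLin Aᵀ),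
      mulE T x ∈ LinearMap.range (Matrix.toEuclideanLin Aᵀ)) ∧
    (∀ x : EuclideanSpace ℝ (Fin n),
      ‖mulE T x‖ = ‖x‖ ↔ x ∈ LinearMap.ker (Matrix.toEuclideanLin A)) ∧
    ‖mulE T‖ ≤ 1 := by
  set V : Submodule ℝ (EuclideanSpace ℝ (Fin n)) :=
    LinearMap.range (Matrix.toEuclideanLin Aᵀ) with hV
  -- the fundamental pointwise identity from h1
  have hfull : ∀ x : EuclideanSpace ℝ (Fin n),
      mulE T x = x - mulE R (mulE A x) := by
    intro x
    have h := congrArg (fun M => Matrix.toEuclideanLin M x) h1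
    simp only [map_add, LinearMap.add_apply, toEuclideanLin_mul_apply,
      toEuclideanLin_one_apply] at h
    rw [mulE_apply, mulE_apply, mulE_apply]
    rw [eq_sub_iff_add_eq]
    exact h
  -- kernel of A is the orthogonal complement of V
  have hadj : Matrix.toEuclideanLin Aᵀ = LinearMap.adjoint (Matrix.toEuclideanLin A) := by
    rw [← Matrix.toEuclideanLin_conjTranspose_eq_adjoint,
      Matrix.conjTranspose_eq_transpose_of_trivial]
  have hker : LinearMap.ker (Matrix.toEuclideanLin A) = Vᗮ := by
    ext x
    rw [Submodule.mem_orthogonal, LinearMap.mem_ker]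
    constructor
    · intro hx u hu
      obtain ⟨y, rfl⟩ := hu
      rw [hadj, LinearMap.adjoint_inner_left, hx, inner_zero_right]
    · intro hx
      have := hx (Matrix.toEuclideanLin Aᵀ ((Matrix.toEuclideanLin A) x))
        ⟨_, rfl⟩
      rw [hadj, LinearMap.adjoint_inner_left] at this
      exact inner_self_eq_zero.mp this
  -- part (i)
  have part1 : ∀ x ∈ LinearMap.ker (Matrix.toEuclideanLin A), mulE T x = x := by
    intro x hx
    rw [hfull]
    rw [LinearMap.mem_ker] at hx
    rw [mulE_apply A, hx]
    simp
  -- part (ii)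
  have part2 : ∀ x ∈ V, mulE T x ∈ V := by
    intro x hx
    rw [hfull]
    exact V.sub_mem hx (h2 _)
  -- the key norm estimate on V
  have hTV : ∀ v ∈ V, ‖mulE T v‖ ≤
      ‖(mulE T).comp (projCLM V)‖ * ‖v‖ := by
    intro v hv
    have hproj : projCLM V v = v := by
      exact V.starProjection_eq_self_iff.mpr hv
    calc ‖mulE T v‖ = ‖((mulE T).comp (projCLM V)) v‖ := by
          rw [ContinuousLinearMap.comp_apply, hproj]
      _ ≤ ‖(mulE T).comp (projCLM V)‖ * ‖v‖ :=
          ContinuousLinearMap.le_opNorm _ _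
  -- decomposition lemma
  have hdecomp : ∀ x : EuclideanSpace ℝ (Fin n),
      ∃ u v, u ∈ Vᗮ ∧ v ∈ V ∧ x = u + v := by
    intro x
    refine ⟨x - (V.orthogonalProjectionOnto x : EuclideanSpace ℝ (Fin n)),
      (V.orthogonalProjectionOnto x : EuclideanSpace ℝ (Fin n)),
      V.sub_starProjection_mem_orthogonal x, (V.orthogonalProjectionOnto x).2, by abel⟩
  set c := ‖(mulE T).comp (projCLM V)‖ with hc
  have hc0 : 0 ≤ c := norm_nonneg _
  -- pythagoras-style computation
  have hpyth : ∀ u v : EuclideanSpace ℝ (Fin n), u ∈ Vᗮ → v ∈ V →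
      ‖u + v‖ ^ 2 = ‖u‖ ^ 2 + ‖v‖ ^ 2 := by
    intro u v hu hv
    have horth : (inner ℝ u v : ℝ) = 0 := by
      rw [real_inner_comm]
      exact (Submodule.mem_orthogonal V u).mp hu v hv
    rw [norm_add_sq_real, horth]
    ring
  have main : ∀ x : EuclideanSpace ℝ (Fin n),
      (‖mulE T x‖ ≤ ‖x‖) ∧ (‖mulE T x‖ = ‖x‖ → x ∈ LinearMap.ker (Matrix.toEuclideanLin A)) := by
    intro x
    obtain ⟨u, v, hu, hv, rfl⟩ := hdecomp x
    have hTu : mulE T u = u := part1 u (hker ▸ hu)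
    have hTx : mulE T (u + v) = u + mulE T v := by
      rw [map_add, hTu]
    have hTvV : mulE T v ∈ V := part2 v hv
    have e1 : ‖mulE T (u + v)‖ ^ 2 = ‖u‖ ^ 2 + ‖mulE T v‖ ^ 2 := by
      rw [hTx]; exact hpyth u (mulE T v) hu hTvV
    have e2 : ‖u + v‖ ^ 2 = ‖u‖ ^ 2 + ‖v‖ ^ 2 := hpyth u v hu hv
    have hTvle : ‖mulE T v‖ ≤ c * ‖v‖ := hTV v hv
    have hTvle' : ‖mulE T v‖ ≤ ‖v‖ :=
      hTvle.trans (mul_le_of_le_one_left (norm_nonneg v) h3.le)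
    have hTvsq : ‖mulE T v‖ ^ 2 ≤ ‖v‖ ^ 2 :=
      pow_le_pow_left₀ (norm_nonneg _) hTvle' 2
    have hle : ‖mulE T (u + v)‖ ≤ ‖u + v‖ := by
      have hsq : ‖mulE T (u + v)‖ ^ 2 ≤ ‖u + v‖ ^ 2 := by
        rw [e1, e2]; linarith
      exact le_of_pow_le_pow_left₀ two_ne_zero (norm_nonneg _) hsq
    refine ⟨hle, fun heq => ?_⟩
    have hsqeq : ‖u‖ ^ 2 + ‖mulE T v‖ ^ 2 = ‖u‖ ^ 2 + ‖v‖ ^ 2 := by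
      rw [← e1, ← e2, heq]
    have hTv2 : ‖mulE T v‖ ^ 2 = ‖v‖ ^ 2 := by linarith
    have hv0 : ‖v‖ = 0 := by
      by_contra hvne
      have hvpos : 0 < ‖v‖ := lt_of_le_of_ne (norm_nonneg v) (Ne.symm hvne)
      have hlt : ‖mulE T v‖ < ‖v‖ :=
        hTvle.trans_lt (by nlinarith)
      have hprod : 0 < (‖v‖ - ‖mulE T v‖) * (‖v‖ + ‖mulE T v‖) :=
        mul_pos (sub_pos.mpr hlt) (by positivity)
      have hexp : (‖v‖ - ‖mulE T v‖) * (‖v‖ + ‖mulE T v‖)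
          = ‖v‖ ^ 2 - ‖mulE T v‖ ^ 2 := by ring
      rw [hexp] at hprod
      linarith
    have : v = 0 := by simpa using hv0
    rw [this, add_zero]
    exact hker ▸ hu
  refine ⟨part1, part2, fun x => ⟨(main x).2, fun hx => by rw [part1 x hx]⟩,
    (mulE T).opNorm_le_bound zero_le_one (fun x => by simpa using (main x).1)⟩
end

section
/- Let C and C̄ be the metric projections onto boxes [a,b] and [ā,b̄] in ℝⁿ respectively, with [ā,b̄] ⊆ [a,b]. Then for any y ∈ [ā,b̄] and any z ∈ ℝⁿ, ‖C̄z − y‖ ≤ ‖Cz − y‖. -/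
/-- If `C` and `C̄` are the metric projections onto boxes `[a,b]` and `[ā,b̄]` with
`[ā,b̄] ⊆ [a,b]`, then for any `y ∈ [ā,b̄]` and any `z`, `‖C̄z − y‖ ≤ ‖Cz − y‖`. -/
theorem nested_box_projection_closer (n : ℕ)
    (a b abar bbar : Fin n → ℝ)
    (hbox : ∀ i, abar i ≤ bbar i)
    (hincl : ∀ i, a i ≤ abar i ∧ bbar i ≤ b i)
    (C Cbar : EuclideanSpace ℝ (Fin n) → EuclideanSpace ℝ (Fin n))
    (hC : ∀ x i, C x i =
      if x i < a i then a i else if b i < x i then b i else x i)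
    (hCbar : ∀ x i, Cbar x i =
      if x i < abar i then abar i else if bbar i < x i then bbar i else x i)
    (y : EuclideanSpace ℝ (Fin n)) (hy : ∀ i, abar i ≤ y i ∧ y i ≤ bbar i) :
    ∀ z : EuclideanSpace ℝ (Fin n), ‖Cbar z - y‖ ≤ ‖C z - y‖ := by
  intro z
  have key : ∀ i, |Cbar z i - y i| ≤ |C z i - y i| := by
    intro i
    rw [hC, hCbar]
    obtain ⟨h1, h2⟩ := hy i
    obtain ⟨h3, h4⟩ := hincl i
    have h5 := hbox i
    split_ifs <;>
      first
      | linarith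
      | (rw [abs_of_nonpos (by linarith), abs_of_nonpos (by linarith)]; linarith)
      | (rw [abs_of_nonneg (by linarith), abs_of_nonneg (by linarith)]; linarith)
      | simp
  rw [EuclideanSpace.norm_eq, EuclideanSpace.norm_eq]
  apply Real.sqrt_le_sqrt
  apply Finset.sum_le_sum
  intro i _
  have : |(Cbar z - y) i| ≤ |(C z - y) i| := key i
  exact pow_le_pow_left₀ (abs_nonneg _) this 2
end
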